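/- Theorem 1 (soundness of extend for the Clique-Sharing domain): let cl₁, cl₂ be clique sets, sh₁, sh₂ be sharing sets, and G a finite set of variables. Let (cl', sh') be any pair satisfying ↓cl' ∪ sh' ⊇ ↓(cl₁_G* ∪ (cl₁_G* ⊎ sh₁_G*)) ∪ (sh₁_G)* (as produced by a sharing-preserving normalization). Define extsh = (sh₁ \ sh₁_G) ∪ {u ∈ sh' : u ∩ G ∈ sh₂}; extcl = rel̄(G, cl₁) ∪ {(C ∩ D) ∪ (C \ G) : C ∈ cl', D ∈ cl₂}; clsh = {u : ∃ C ∈ cl', u ⊆ C and u ∩ G ∈ sh₂}; shcl = {u ∈ sh' : ∃ D ∈ cl₂, u ∩ G ⊆ D}. Then ↓extcl ∪ (extsh ∪ clsh ∪ shcl) ⊇ extend(↓cl₁ ∪ sh₁, G, ↓cl₂ ∪ sh₂). -/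
import Mathlib


variable {V : Type*} [DecidableEq V]

/-- `℘⁰(C)`: the set of nonempty subsets of a finite set `C`. -/
def pow0 (C : Finset V) : Set (Finset V) := {u | u ⊆ C ∧ u ≠ ∅}

/-- Concretization of a clique set: `↓cl = ⋃_{C ∈ cl} ℘⁰(C)`. -/
def conc (cl : Set (Finset V)) : Set (Finset V) := ⋃ C ∈ cl, pow0 C

/-- Binary union: `s₁ ⊎ s₂ = {a ∪ b : a ∈ s₁, b ∈ s₂}`. -/
def bin (s₁ s₂ : Set (Finset V)) : Set (Finset V) :=
  {u | ∃ a ∈ s₁, ∃ b ∈ s₂, u = a ∪ b}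

/-- Star union: all unions `⋃ T` over finite nonempty subfamilies `T ⊆ s`. -/
def starU (s : Set (Finset V)) : Set (Finset V) :=
  {u | ∃ T : Finset (Finset V), T.Nonempty ∧ ↑T ⊆ s ∧ u = T.sup id}

/-- `s_G`: the part of `s` relevant to `G` (groups intersecting `G`). -/
def relG (G : Finset V) (s : Set (Finset V)) : Set (Finset V) :=
  {u ∈ s | u ∩ G ≠ ∅}

/-- `rel̄(S, cl) = {C \ S : C ∈ cl} \ {∅}`. -/
def relbar (S : Finset V) (cl : Set (Finset V)) : Set (Finset V) :=
  {d | (∃ C ∈ cl, d = C \ S) ∧ d ≠ ∅}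

/-- `project(G, s) = {u ∩ G : u ∈ s} \ {∅}`. -/
def sproject (G : Finset V) (s : Set (Finset V)) : Set (Finset V) :=
  {d | (∃ u ∈ s, d = u ∩ G) ∧ d ≠ ∅}

/-- Abstract unification of the Sharing domain for `x = t`, `T` the variables of `t`. -/
def amgu (x : V) (T : Finset V) (s : Set (Finset V)) : Set (Finset V) :=
  (s \ relG ({x} ∪ T) s) ∪ bin (starU (relG {x} s)) (starU (relG T s))

/-- The `extend` function of the Sharing domain. -/
def extendSh (Call : Set (Finset V)) (G : Finset V) (Prime : Set (Finset V)) :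
    Set (Finset V) :=
  {u ∈ Call | u ∩ G = ∅} ∪ {u ∈ starU (relG G Call) | u ∩ G ∈ Prime}

/-- Union of all groups of `s` containing `x`, as a set of variables. -/
def occSet (s : Set (Finset V)) (x : V) : Set V :=
  ⋃ u ∈ {u ∈ s | x ∈ u}, (↑u : Set V)


private lemma mem_conc' {cl : Set (Finset V)} {u : Finset V} :
    u ∈ conc cl ↔ ∃ C ∈ cl, u ⊆ C ∧ u ≠ ∅ := by
  simp only [conc, pow0, Set.mem_iUnion, Set.mem_setOf_eq]; tauto

private lemma star_decomp (cl₁ sh₁ : Set (Finset V)) (G : Finset V) {u : Finset V}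
    (hu : u ∈ starU (relG G (conc cl₁ ∪ sh₁))) :
    (u ∈ conc (starU (relG G cl₁) ∪ bin (starU (relG G cl₁)) (starU (relG G sh₁)))
      ∪ starU (relG G sh₁)) ∧ u ∩ G ≠ ∅ := by
  classical
  obtain ⟨T, hTne, hTsub, rfl⟩ := hu
  -- every element of T is nonempty on G
  have hTG : ∀ t ∈ T, t ∩ G ≠ ∅ := fun t ht => (hTsub ht).2
  have hTmem : ∀ t ∈ T, t ∈ conc cl₁ ∪ sh₁ := fun t ht => (hTsub ht).1
  obtain ⟨t₀, ht₀⟩ := hTne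
  have hsubsup : ∀ t ∈ T, t ⊆ T.sup id := fun t ht => Finset.le_sup (f := id) ht
  have hG : T.sup id ∩ G ≠ ∅ := by
    intro h
    apply hTG t₀ ht₀
    have : t₀ ∩ G ⊆ T.sup id ∩ G := Finset.inter_subset_inter (hsubsup t₀ ht₀) le_rfl
    rw [h] at this
    exact Finset.subset_empty.mp this
  refine ⟨?_, hG⟩
  have hune : T.sup id ≠ ∅ := by
    intro h; apply hG; rw [h]; simp
  -- choice function for cliques
  set f : Finset V → Finset V := fun t =>
    if h : ∃ C ∈ cl₁, t ⊆ C then h.choose else ∅ with hf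
  have hfspec : ∀ t, t ∈ conc cl₁ → f t ∈ cl₁ ∧ t ⊆ f t := by
    intro t ht
    rw [mem_conc'] at ht
    obtain ⟨C, hC, hsub, -⟩ := ht
    have h : ∃ C ∈ cl₁, t ⊆ C := ⟨C, hC, hsub⟩
    simp only [hf, dif_pos h]
    exact ⟨h.choose_spec.1, h.choose_spec.2⟩
  by_cases hall : ∀ t ∈ T, t ∈ sh₁
  · right
    exact ⟨T, ⟨t₀, ht₀⟩, fun t ht => ⟨hall t ht, hTG t ht⟩, rfl⟩
  · left
    push_neg at hall
    obtain ⟨s₀, hs₀T, hs₀⟩ := hall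
    set Tc : Finset (Finset V) := T.filter (fun t => t ∉ sh₁) with hTc
    set Ts : Finset (Finset V) := T.filter (fun t => t ∈ sh₁) with hTs
    have hTcne : Tc.Nonempty := ⟨s₀, Finset.mem_filter.mpr ⟨hs₀T, hs₀⟩⟩
    have hTcconc : ∀ t ∈ Tc, t ∈ conc cl₁ := by
      intro t ht
      rw [Finset.mem_filter] at ht
      rcases hTmem t ht.1 with h | h
      · exact h
      · exact absurd h ht.2
    -- the clique union A
    have hA : (Tc.image f).sup id ∈ starU (relG G cl₁) := by
      refine ⟨Tc.image f, hTcne.image f, ?_, rfl⟩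
      intro C hC
      simp only [Finset.coe_image, Set.mem_image, Finset.mem_coe] at hC
      obtain ⟨t, htc, rfl⟩ := hC
      have h1 := hfspec t (hTcconc t htc)
      refine ⟨h1.1, ?_⟩
      intro hempty
      apply hTG t (Finset.mem_filter.mp htc).1
      have : t ∩ G ⊆ f t ∩ G := Finset.inter_subset_inter h1.2 le_rfl
      rw [hempty] at this
      exact Finset.subset_empty.mp this
    have hsubA : ∀ t ∈ Tc, t ⊆ (Tc.image f).sup id := by
      intro t ht
      exact (hfspec t (hTcconc t ht)).2.trans
        (Finset.le_sup (f := id) (Finset.mem_image_of_mem f ht))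
    rw [mem_conc']
    by_cases hTsne : Ts.Nonempty
    · refine ⟨(Tc.image f).sup id ∪ Ts.sup id,
        Or.inr ⟨(Tc.image f).sup id, hA, Ts.sup id, ?_, rfl⟩, ?_, hune⟩
      · refine ⟨Ts, hTsne, ?_, rfl⟩
        intro t ht
        rw [Finset.mem_coe, Finset.mem_filter] at ht
        exact ⟨ht.2, hTG t ht.1⟩
      · intro x hx
        rw [Finset.mem_sup] at hx
        obtain ⟨t, ht, hxt⟩ := hx
        by_cases hts : t ∈ sh₁
        · exact Finset.mem_union_right _
            (Finset.mem_sup.mpr ⟨t, Finset.mem_filter.mpr ⟨ht, hts⟩, hxt⟩)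
        · exact Finset.mem_union_left _
            (hsubA t (Finset.mem_filter.mpr ⟨ht, hts⟩) hxt)
    · refine ⟨(Tc.image f).sup id, Or.inl hA, ?_, hune⟩
      intro x hx
      rw [Finset.mem_sup] at hx
      obtain ⟨t, ht, hxt⟩ := hx
      have hts : t ∉ sh₁ := fun h => hTsne ⟨t, Finset.mem_filter.mpr ⟨ht, h⟩⟩
      exact hsubA t (Finset.mem_filter.mpr ⟨ht, hts⟩) hxt

/-- Theorem 1: soundness of extend for the Clique-Sharing domain. -/
theorem extend_clique_sharing_sound
    (cl₁ cl₂ cl' : Set (Finset V)) (sh₁ sh₂ sh' : Set (Finset V)) (G : Finset V)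
    (hnorm :
      conc (starU (relG G cl₁) ∪ bin (starU (relG G cl₁)) (starU (relG G sh₁)))
        ∪ starU (relG G sh₁) ⊆ conc cl' ∪ sh') :
    extendSh (conc cl₁ ∪ sh₁) G (conc cl₂ ∪ sh₂) ⊆
      conc (relbar G cl₁ ∪ {e | ∃ C ∈ cl', ∃ D ∈ cl₂, e = (C ∩ D) ∪ (C \ G)})
        ∪ (((sh₁ \ relG G sh₁) ∪ {u ∈ sh' | u ∩ G ∈ sh₂})
            ∪ {u | ∃ C ∈ cl', u ⊆ C ∧ u ∩ G ∈ sh₂}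
            ∪ {u ∈ sh' | ∃ D ∈ cl₂, u ∩ G ⊆ D}) := by
  classical
  intro u hu
  rcases hu with ⟨hu1, huG⟩ | ⟨hu1, huG⟩
  · -- u ∩ G = ∅ case
    rcases hu1 with hcl | hsh
    · -- u in conc cl₁ : goes to relbar part
      rw [mem_conc'] at hcl
      obtain ⟨C, hC, hsub, hne⟩ := hcl
      left
      rw [mem_conc']
      refine ⟨C \ G, Or.inl ⟨⟨C, hC, rfl⟩, ?_⟩, ?_, hne⟩
      · intro h
        apply hne
        have : u ⊆ C \ G := by
          intro x hx
          rw [Finset.mem_sdiff]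
          refine ⟨hsub hx, fun hxG => ?_⟩
          have : x ∈ u ∩ G := Finset.mem_inter.mpr ⟨hx, hxG⟩
          rw [huG] at this; exact absurd this (Finset.notMem_empty x)
        rw [h] at this
        exact Finset.subset_empty.mp this
      · intro x hx
        rw [Finset.mem_sdiff]
        refine ⟨hsub hx, fun hxG => ?_⟩
        have : x ∈ u ∩ G := Finset.mem_inter.mpr ⟨hx, hxG⟩
        rw [huG] at this; exact absurd this (Finset.notMem_empty x)
    · -- u in sh₁ : goes to sh₁ \ relG G sh₁
      right; left; left
      exact Or.inl ⟨hsh, fun h => h.2 huG⟩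
  · -- star union case
    obtain ⟨hmem, huGne⟩ := star_decomp cl₁ sh₁ G hu1
    have hmem' : u ∈ conc cl' ∪ sh' := hnorm hmem
    rcases hmem' with hucl | hush
    · rw [mem_conc'] at hucl
      obtain ⟨C, hC, hsub, hne⟩ := hucl
      rcases huG with hGcl | hGsh
      · -- u ∩ G ∈ conc cl₂ : extcl part
        rw [mem_conc'] at hGcl
        obtain ⟨D, hD, hsubD, -⟩ := hGcl
        left
        rw [mem_conc']
        refine ⟨(C ∩ D) ∪ (C \ G), Or.inr ⟨C, hC, D, hD, rfl⟩, ?_, hne⟩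
        intro x hx
        by_cases hxG : x ∈ G
        · exact Finset.mem_union_left _
            (Finset.mem_inter.mpr ⟨hsub hx, hsubD (Finset.mem_inter.mpr ⟨hx, hxG⟩)⟩)
        · exact Finset.mem_union_right _
            (Finset.mem_sdiff.mpr ⟨hsub hx, hxG⟩)
      · -- u ∩ G ∈ sh₂ : clsh part
        right; left; right
        exact ⟨C, hC, hsub, hGsh⟩
    · rcases huG with hGcl | hGsh
      · -- shcl part
        rw [mem_conc'] at hGcl
        obtain ⟨D, hD, hsubD, -⟩ := hGcl
        right; right
        exact ⟨hush, D, hD, hsubD⟩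
      · -- sh' with u∩G ∈ sh₂
        right; left; left
        exact Or.inr ⟨hush, hGsh⟩
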